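/- Let H be a group acting on a set S such that the stabilizer H_s of every s ∈ S is finite, and let Γ ≤ H be a subgroup of finite index. Then for every s ∈ S, Σ_O |H_s| / |Γ_{x_O}| = [H : Γ], where the sum runs over the Γ-orbits O contained in the H-orbit of s and x_O ∈ O is any representative (the order |Γ_{x_O}| does not depend on the choice of representative). In particular, this sum takes the same value for every s ∈ S. -/

import Mathlib

open SimpleGraph MulAction
open scoped ENNReal

universe u

variable {V : Type u}

/-- The automorphism group of a simple graph, as a subgroup of the permutation group
of its vertex set. -/
def SimpleGraph.autGroup (G : SimpleGraph V) : Subgroup (Equiv.Perm V) where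
  carrier := {f | ∀ u v : V, G.Adj (f u) (f v) ↔ G.Adj u v}
  one_mem' := by intro u v; simp
  mul_mem' := by
    intro a b ha hb u v
    simp only [Set.mem_setOf_eq, Equiv.Perm.mul_apply] at *
    rw [ha, hb]
  inv_mem' := by
    intro a ha u v
    simpa using (ha (a⁻¹ u) (a⁻¹ v)).symm

/-- A subgroup of the permutation group of the vertices is discrete if all vertex
stabilizers are finite. -/
def IsDiscreteSubgroup (Γ : Subgroup (Equiv.Perm V)) : Prop :=
  ∀ v : V, Finite (stabilizer Γ v)

/-- The `S`-covolume of a subgroup `Γ` of the permutation group of the vertices: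
the sum of `1 / |Γ_v|` over the `Γ`-orbits meeting `S` (for `Γ`-invariant `S`, the
orbits contained in `S`), where `v` is a representative of the orbit. -/
noncomputable def covolume (Γ : Subgroup (Equiv.Perm V)) (S : Set V) : ℝ≥0∞ :=
  ∑' O : {O : Quotient (orbitRel Γ V) // Quotient.out O ∈ S},
    ((Nat.card (stabilizer Γ (Quotient.out (O : Quotient (orbitRel Γ V))))) : ℝ≥0∞)⁻¹

/-- A lattice: a discrete subgroup with finite covolume with respect to the set of
all vertices. -/
def IsGraphLattice (Γ : Subgroup (Equiv.Perm V)) : Prop :=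
  IsDiscreteSubgroup Γ ∧ covolume Γ Set.univ ≠ ⊤

/-- A nonuniform lattice: a lattice with infinitely many orbits of vertices. -/
def IsNonuniformLattice (Γ : Subgroup (Equiv.Perm V)) : Prop :=
  IsGraphLattice Γ ∧ Infinite (Quotient (orbitRel Γ V))

/-- `f ⪯ g` : there are `a, b` with `f k ≤ a * g (k + b)` for all `k`. -/
def GrowthLE (f g : ℕ → ℕ) : Prop :=
  ∃ a b : ℕ, ∀ k : ℕ, f k ≤ a * g (k + b)

/-- Equivalence of growth types. -/
def GrowthEquiv (f g : ℕ → ℕ) : Prop :=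
  GrowthLE f g ∧ GrowthLE g f

/-- The number of `Γ`-orbits of vertices meeting the ball of radius `k` about `x₀`. -/
noncomputable def quotientGrowth (G : SimpleGraph V) (Γ : Subgroup (Equiv.Perm V))
    (x₀ : V) (k : ℕ) : ℕ :=
  Nat.card {O : Quotient (orbitRel Γ V) //
    ∃ v : V, Quotient.mk (orbitRel Γ V) v = O ∧ G.dist v x₀ ≤ k}

/-- The maximal order of a `Γ`-stabilizer of a vertex in the ball of radius `k`
about `x₀`. -/
noncomputable def stabilizerGrowth (G : SimpleGraph V) (Γ : Subgroup (Equiv.Perm V))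
    (x₀ : V) (k : ℕ) : ℕ :=
  sSup {c : ℕ | ∃ v : V, G.dist v x₀ ≤ k ∧ c = Nat.card (stabilizer Γ v)}

/-- The `p`-order of a (finite) group order `k` : the largest power of `p` dividing `k`. -/
def pOrder (p k : ℕ) : ℕ := p ^ (k.factorization p)

/-- The maximal `p`-order of a `Γ`-stabilizer of a vertex in the ball of radius `k`
about `x₀`. -/
noncomputable def pStabilizerGrowth (G : SimpleGraph V) (Γ : Subgroup (Equiv.Perm V))
    (p : ℕ) (x₀ : V) (k : ℕ) : ℕ :=
  sSup {c : ℕ | ∃ v : V, G.dist v x₀ ≤ k ∧ c = pOrder p (Nat.card (stabilizer Γ v))}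

/-- `Γ` and `Γ'` are commensurable in (a subgroup) `A` of the permutation group:
some `A`-conjugate of `Γ` intersects `Γ'` in finite index in both. -/
def CommensurableIn {GG : Type u} [Group GG] (A Γ Γ' : Subgroup GG) : Prop :=
  ∃ g ∈ A, Subgroup.Commensurable (Subgroup.map (MulAut.conj g).toMonoidHom Γ) Γ'

/-- An `(m,n)`-biregular tree with parts `V₀`, `V₁`. -/
structure IsBiregularTree (G : SimpleGraph V) (V₀ V₁ : Set V) (m n : ℕ) : Prop where
  connected : G.Connected
  acyclic : G.IsAcyclic
  disjoint : Disjoint V₀ V₁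
  union : V₀ ∪ V₁ = Set.univ
  adj_parts : ∀ ⦃u v : V⦄, G.Adj u v → (u ∈ V₀ ∧ v ∈ V₁) ∨ (u ∈ V₁ ∧ v ∈ V₀)
  degree₀ : ∀ v ∈ V₀, (G.neighborSet v).Finite ∧ (G.neighborSet v).ncard = m
  degree₁ : ∀ v ∈ V₁, (G.neighborSet v).Finite ∧ (G.neighborSet v).ncard = n

/-- A star tree of degree `m` with parts `V₀`, `V₁`. -/
structure IsStarTree (A : SimpleGraph V) (V₀ V₁ : Set V) (m : ℕ) : Prop where
  connected : A.Connected
  acyclic : A.IsAcyclic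
  disjoint : Disjoint V₀ V₁
  union : V₀ ∪ V₁ = Set.univ
  adj_parts : ∀ ⦃u v : V⦄, A.Adj u v → (u ∈ V₀ ∧ v ∈ V₁) ∨ (u ∈ V₁ ∧ v ∈ V₀)
  degree₀ : ∀ v ∈ V₀, (A.neighborSet v).Finite ∧ (A.neighborSet v).ncard = m
  degree₁ : ∀ v ∈ V₁, (A.neighborSet v).Finite ∧
    ((A.neighborSet v).ncard = 1 ∨ (A.neighborSet v).ncard = 2)

/-- The quotient graph `Γ\X`: vertices are `Γ`-orbits; two distinct orbits are
adjacent iff some vertex of one is adjacent to some vertex of the other. -/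
def quotientGraph (G : SimpleGraph V) (Γ : Subgroup (Equiv.Perm V)) :
    SimpleGraph (Quotient (orbitRel Γ V)) where
  Adj O O' := O ≠ O' ∧ ∃ u v : V, Quotient.mk (orbitRel Γ V) u = O ∧
    Quotient.mk (orbitRel Γ V) v = O' ∧ G.Adj u v
  symm := ⟨by
    rintro O O' ⟨hne, u, v, hu, hv, huv⟩
    exact ⟨hne.symm, v, u, hv, hu, huv.symm⟩⟩
  loopless := ⟨fun O h => h.1 rfl⟩

/-- An acceptable quotient growth function. -/
structure AcceptableGrowth (f : ℕ → ℕ) : Prop where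
  base : f 0 = 1
  one_le : ∀ j : ℕ, 1 ≤ f (j + 1)
  le_two_mul : ∀ j : ℕ, f (j + 1) ≤ 2 * f j
  summable : Summable fun j : ℕ => (f j : ℝ) / 2 ^ j

/-- An `n`-admissible sequence `s`, indexed by `k ≥ 1`. -/
def NAdmissible (n : ℕ) (s : ℕ → ℕ) : Prop :=
  ∀ k : ℕ, 1 ≤ k → s k ∣ n ∧ 2 < s k ∧ s k ≤ n

/-- The associated function `h j = (s 1 - 1) * ⋯ * (s j - 1)`, with `h 0 = 1`. -/
def admProd (s : ℕ → ℕ) (j : ℕ) : ℕ := ∏ i ∈ Finset.Icc 1 j, (s i - 1)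

/-- If a group `H` acts on a set `S` with finite stabilizers and
`Γ ≤ H` has finite index, then for every `s ∈ S` the sum of `|H_s| / |Γ_x|` over
the `Γ`-orbits contained in the `H`-orbit of `s` equals `[H : Γ]`; in particular
this sum is the same for every `s`. -/
theorem statement5 {H : Type u} [Group H] {S : Type u} [MulAction H S]
    (hfin : ∀ s : S, Finite (stabilizer H s))
    (Γ : Subgroup H) (hΓ : Γ.FiniteIndex) (s : S) :
    ∑' O : {O : Quotient (orbitRel Γ S) // Quotient.out O ∈ orbit H s},
        (Nat.card (stabilizer H s) : ℝ≥0∞) /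
          (Nat.card (stabilizer Γ (Quotient.out (O : Quotient (orbitRel Γ S)))) : ℝ≥0∞)
      = (Γ.index : ℝ≥0∞) := by
  classical
  haveI := hΓ
  haveI : Finite (H ⧸ Γ) := Γ.finite_quotient_of_finiteIndex
  haveI : Finite (stabilizer H s) := hfin s
  -- the map from cosets to orbits
  have wd : ∀ g g' : H, @Setoid.r _ (QuotientGroup.leftRel Γ) g g' →
      Quotient.mk (orbitRel Γ S) (g⁻¹ • s) = Quotient.mk (orbitRel Γ S) (g'⁻¹ • s) := by
    intro g g' hgg'
    rw [QuotientGroup.leftRel_apply] at hgg'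
    refine Quotient.sound (orbitRel_apply.mpr ⟨⟨g⁻¹ * g', hgg'⟩, ?_⟩)
    show (g⁻¹ * g') • g'⁻¹ • s = g⁻¹ • s
    rw [mul_smul]; simp [smul_smul]
  let f : H ⧸ Γ → Quotient (orbitRel Γ S) :=
    fun q => Quotient.liftOn q (fun g => Quotient.mk (orbitRel Γ S) (g⁻¹ • s)) wd
  have hf : ∀ g : H, f (QuotientGroup.mk g) = Quotient.mk (orbitRel Γ S) (g⁻¹ • s) :=
    fun g => rfl
  have hmem : ∀ q : H ⧸ Γ, Quotient.out (f q) ∈ orbit H s := by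
    refine Quotient.ind (fun g => ?_)
    obtain ⟨γ, hγ⟩ := orbitRel_apply.mp
      (Quotient.exact (Quotient.out_eq (Quotient.mk (orbitRel Γ S) (g⁻¹ • s))))
    exact ⟨(γ : H) * g⁻¹, by show ((γ : H) * g⁻¹) • s = _; rw [mul_smul]; exact hγ⟩
  let fh : H ⧸ Γ → {O : Quotient (orbitRel Γ S) // Quotient.out O ∈ orbit H s} :=
    fun q => ⟨f q, hmem q⟩
  have hsurj : Function.Surjective fh := by
    rintro ⟨O, hO⟩
    obtain ⟨h, hh⟩ := hO
    refine ⟨QuotientGroup.mk h⁻¹, Subtype.ext ?_⟩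
    show f (QuotientGroup.mk h⁻¹) = O
    rw [hf, inv_inv, show h • s = O.out from hh, Quotient.out_eq]
  haveI : Finite {O : Quotient (orbitRel Γ S) // Quotient.out O ∈ orbit H s} :=
    Finite.of_surjective fh hsurj
  haveI : Fintype {O : Quotient (orbitRel Γ S) // Quotient.out O ∈ orbit H s} :=
    Fintype.ofFinite _
  haveI : Fintype (H ⧸ Γ) := Fintype.ofFinite _
  -- the key cardinality identity
  have key : ∀ O : {O : Quotient (orbitRel Γ S) // Quotient.out O ∈ orbit H s},
      Nat.card {q : H ⧸ Γ // fh q = O} *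
        Nat.card (stabilizer Γ (Quotient.out (O : Quotient (orbitRel Γ S))))
      = Nat.card (stabilizer H s) := by
    rintro ⟨O, hO⟩
    set x := Quotient.out O with hxdef
    obtain ⟨h, hx⟩ := hO
    set p : H ⧸ Γ := QuotientGroup.mk h⁻¹ with hp
    -- fiber equals orbit of p under stabilizer H s
    have hfiber : ∀ q : H ⧸ Γ, fh q = ⟨O, hO⟩ ↔ q ∈ orbit (stabilizer H s) p := by
      refine Quotient.ind (fun g => ?_)
      have h1 : fh (QuotientGroup.mk g) = ⟨O, hO⟩ ↔ (g⁻¹ • s) ∈ orbit Γ x := by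
        rw [Subtype.ext_iff]
        show f (QuotientGroup.mk g) = O ↔ _
        rw [hf]
        constructor
        · intro he
          exact orbitRel_apply.mp (Quotient.exact (he.trans (Quotient.out_eq O).symm))
        · intro hm
          rw [← Quotient.out_eq O]
          exact Quotient.sound (orbitRel_apply.mpr hm)
      rw [h1]
      constructor
      · rintro ⟨γ, hγ⟩
        have hγ' : (γ : H) • x = g⁻¹ • s := hγ
        have hk : (g * (γ : H) * h) ∈ stabilizer H s := by
          rw [mem_stabilizer_iff, mul_smul, mul_smul, show h • s = x from hx, hγ', smul_inv_smul]
        refine ⟨⟨g * (γ : H) * h, hk⟩, ?_⟩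
        show (g * (γ : H) * h) • p = QuotientGroup.mk g
        rw [hp]
        rw [MulAction.Quotient.smul_mk]
        refine QuotientGroup.eq.mpr ?_
        have : ((g * ((γ : H)) * h) • h⁻¹)⁻¹ * g = (γ : H)⁻¹ := by
          simp only [smul_eq_mul]; group
        rw [this]
        exact Γ.inv_mem γ.2
      · rintro ⟨a, ha⟩
        have ha' : ((a : H) : H) • p = QuotientGroup.mk g := ha
        rw [hp, MulAction.Quotient.smul_mk] at ha'
        have hmem' : ((a : H) • h⁻¹)⁻¹ * g ∈ Γ := QuotientGroup.eq.mp ha'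
        have hγm : g⁻¹ * (a : H) * h⁻¹ ∈ Γ := by
          have := Γ.inv_mem hmem'
          have he : (((a : H) • h⁻¹)⁻¹ * g)⁻¹ = g⁻¹ * (a : H) * h⁻¹ := by
            simp only [smul_eq_mul]; group
          rwa [he] at this
        refine ⟨⟨g⁻¹ * (a : H) * h⁻¹, hγm⟩, ?_⟩
        show (g⁻¹ * (a : H) * h⁻¹) • x = g⁻¹ • s
        rw [← hx, mul_smul, mul_smul, inv_smul_smul, (mem_stabilizer_iff.mp a.2 : (a : H) • s = s)]
    -- stabilizer of p in (stabilizer H s) is isomorphic to stabilizer Γ x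
    have hstabeq : Nat.card (stabilizer (stabilizer H s) p) = Nat.card (stabilizer Γ x) := by
      have hmemiff : ∀ a : stabilizer H s, a ∈ stabilizer (stabilizer H s) p ↔
          h * (a : H) * h⁻¹ ∈ Γ := by
        intro a
        rw [mem_stabilizer_iff]
        have : a • p = ((a : H) : H) • p := rfl
        rw [this, hp, MulAction.Quotient.smul_mk]
        rw [show QuotientGroup.mk ((a:H) • h⁻¹) = QuotientGroup.mk ((a:H) * h⁻¹) from rfl]
        rw [QuotientGroup.eq]
        constructor
        · intro hmm
          have := Γ.inv_mem hmm
          have he : (((a : H) * h⁻¹)⁻¹ * h⁻¹)⁻¹ = h * (a : H) * h⁻¹ := by group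
          rwa [he] at this
        · intro hmm
          have := Γ.inv_mem hmm
          have he : (h * (a : H) * h⁻¹)⁻¹ = ((a : H) * h⁻¹)⁻¹ * h⁻¹ := by group
          rwa [he] at this
      refine Nat.card_congr ⟨
        fun a => ⟨⟨h * ((a : stabilizer H s) : H) * h⁻¹, (hmemiff a.1).mp a.2⟩, ?_⟩,
        fun γ => ⟨⟨h⁻¹ * ((γ : Γ) : H) * h, ?_⟩, ?_⟩, ?_, ?_⟩
      · rw [mem_stabilizer_iff]
        show (h * ((a : stabilizer H s) : H) * h⁻¹) • x = x
        rw [← hx, mul_smul, mul_smul, inv_smul_smul,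
          (mem_stabilizer_iff.mp (a : stabilizer H s).2 :
            ((a : stabilizer H s) : H) • s = s)]
      · rw [mem_stabilizer_iff]
        show (h⁻¹ * ((γ : Γ) : H) * h) • s = s
        have hγx : ((γ : Γ) : H) • x = x := γ.2
        rw [mul_smul, mul_smul, show h • s = x from hx, hγx, ← show h • s = x from hx, inv_smul_smul]
      · rw [hmemiff]
        have : h * (h⁻¹ * ((γ : Γ) : H) * h) * h⁻¹ = ((γ : Γ) : H) := by group
        rw [this]
        exact (γ : Γ).2
      · intro a
        refine Subtype.ext (Subtype.ext ?_)
        show h⁻¹ * (h * ((a : stabilizer H s) : H) * h⁻¹) * h = ((a : stabilizer H s) : H)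
        group
      · intro γ
        refine Subtype.ext (Subtype.ext ?_)
        show h * (h⁻¹ * ((γ : Γ) : H) * h) * h⁻¹ = ((γ : Γ) : H)
        group
    have hcardfiber : Nat.card {q : H ⧸ Γ // fh q = ⟨O, hO⟩} =
        Nat.card (orbit (stabilizer H s) p) := by
      exact Nat.card_congr (Equiv.subtypeEquivRight hfiber)
    show Nat.card {q : H ⧸ Γ // fh q = ⟨O, hO⟩} * Nat.card (stabilizer Γ x) =
      Nat.card (stabilizer H s)
    rw [hcardfiber, ← hstabeq, mul_comm, Nat.card_coe_set_eq, ← index_stabilizer,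
      Subgroup.card_mul_index]
  -- nonvanishing
  have hKpos : Nat.card (stabilizer H s) ≠ 0 := Nat.card_pos.ne'
  -- assemble
  rw [tsum_fintype]
  have step : ∀ O : {O : Quotient (orbitRel Γ S) // Quotient.out O ∈ orbit H s},
      (Nat.card (stabilizer H s) : ℝ≥0∞) /
          (Nat.card (stabilizer Γ (Quotient.out (O : Quotient (orbitRel Γ S)))) : ℝ≥0∞)
        = (Nat.card {q : H ⧸ Γ // fh q = O} : ℝ≥0∞) := by
    intro O
    have hΓ0 : Nat.card (stabilizer Γ (Quotient.out (O : Quotient (orbitRel Γ S)))) ≠ 0 := by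
      intro hzero
      apply hKpos
      rw [← key O, hzero, mul_zero]
    symm
    rw [ENNReal.eq_div_iff (by exact_mod_cast hΓ0) (by simp)]
    rw [← Nat.cast_mul, mul_comm, key O]
  rw [Finset.sum_congr rfl (fun O _ => step O), ← Nat.cast_sum]
  have : ∑ O : {O : Quotient (orbitRel Γ S) // Quotient.out O ∈ orbit H s},
      Nat.card {q : H ⧸ Γ // fh q = O} = Nat.card (H ⧸ Γ) := by
    simp_rw [Nat.card_eq_fintype_card]
    rw [← Fintype.card_sigma]
    exact Fintype.card_congr (Equiv.sigmaFiberEquiv fh)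
  rw [this, Subgroup.index_eq_card]
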